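/- Let u₀ be a nonvanishing solution of Δ(p(n-1)Δu(n-1)) + q(n)u(n) = 0, with p nonvanishing. Define u₂(n) = u₀(n) Σ_{k=0}^{|n-n₀|-1} λ^k Y^{(2k+1)}(n) for n ≠ n₀, and u₂(n₀) = 0, where the Y^{(i)} are defined by the recursive indefinite-sum relations from u₀, p, r at base point n₀. Then u₂ solves Δ(p(n-1)Δu(n-1)) + q(n)u(n) = λ r(n) u(n) for all n. -/

import Mathlib

/-- The indefinite sum of `f` vanishing at `n₀`. -/
noncomputable def istar (n₀ : ℤ) (f : ℤ → ℂ) (n : ℤ) : ℂ :=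
  if n₀ ≤ n then ∑ j ∈ Finset.Ico n₀ n, f j else -∑ j ∈ Finset.Ico n n₀, f j

/-- The sequences `X⁽ⁱ⁾`: `X⁽⁰⁾ = 1`, even steps sum `X⁽ⁱ⁻¹⁾(s)/(p(s)u₀(s)u₀(s+1))`,
odd steps sum `u₀(s+1)² X⁽ⁱ⁻¹⁾(s+1) r(s+1)`. -/
noncomputable def Xseq (u₀ p r : ℤ → ℂ) (n₀ : ℤ) : ℕ → ℤ → ℂ
  | 0 => fun _ => 1
  | i + 1 =>
      if (i + 1) % 2 = 0 then
        istar n₀ (fun s => Xseq u₀ p r n₀ i s / (p s * u₀ s * u₀ (s + 1)))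
      else
        istar n₀ (fun s => u₀ (s + 1) ^ 2 * Xseq u₀ p r n₀ i (s + 1) * r (s + 1))

/-- The sequences `Y⁽ⁱ⁾`: `Y⁽⁰⁾ = 1`, with the parity roles exchanged. -/
noncomputable def Yseq (u₀ p r : ℤ → ℂ) (n₀ : ℤ) : ℕ → ℤ → ℂ
  | 0 => fun _ => 1
  | i + 1 =>
      if (i + 1) % 2 = 0 then
        istar n₀ (fun s => u₀ (s + 1) ^ 2 * Yseq u₀ p r n₀ i (s + 1) * r (s + 1))
      else
        istar n₀ (fun s => Yseq u₀ p r n₀ i s / (p s * u₀ s * u₀ (s + 1)))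

lemma sum_Ico_top {a b : ℤ} (f : ℤ → ℂ) (h : a ≤ b) :
    ∑ j ∈ Finset.Ico a (b + 1), f j = (∑ j ∈ Finset.Ico a b, f j) + f b := by
  have he : Finset.Ico a (b + 1) = insert b (Finset.Ico a b) := by
    ext x; simp only [Finset.mem_Ico, Finset.mem_insert]; omega
  rw [he, Finset.sum_insert (by simp)]; ring

lemma sum_Ico_bot {a b : ℤ} (f : ℤ → ℂ) (h : a < b) :
    ∑ j ∈ Finset.Ico a b, f j = f a + ∑ j ∈ Finset.Ico (a + 1) b, f j := by
  have he : Finset.Ico a b = insert a (Finset.Ico (a + 1) b) := by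
    ext x; simp only [Finset.mem_Ico, Finset.mem_insert]; omega
  rw [he, Finset.sum_insert (by simp)]

lemma istar_base (n₀ : ℤ) (f : ℤ → ℂ) : istar n₀ f n₀ = 0 := by
  simp [istar]

lemma istar_succ (n₀ : ℤ) (f : ℤ → ℂ) (m : ℤ) :
    istar n₀ f (m + 1) = istar n₀ f m + f m := by
  unfold istar
  rcases le_or_gt n₀ m with h | h
  · rw [if_pos (by omega), if_pos h, sum_Ico_top f h]
  · rcases le_or_gt n₀ (m + 1) with h2 | h2
    · have : n₀ = m + 1 := by omega
      subst this
      rw [if_pos le_rfl, if_neg (by omega), Finset.Ico_self, Finset.sum_empty,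
        sum_Ico_bot f (by omega : m < m + 1), Finset.Ico_self, Finset.sum_empty]
      ring
    · rw [if_neg (by omega), if_neg (by omega),
        sum_Ico_bot f (by omega : m < n₀)]
      ring

lemma Yseq_zero (u₀ p r : ℤ → ℂ) (n₀ : ℤ) (m : ℤ) : Yseq u₀ p r n₀ 0 m = 1 := rfl

lemma Yseq_odd (u₀ p r : ℤ → ℂ) (n₀ : ℤ) (k : ℕ) :
    Yseq u₀ p r n₀ (2 * k + 1) =
      istar n₀ (fun s => Yseq u₀ p r n₀ (2 * k) s / (p s * u₀ s * u₀ (s + 1))) := by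
  rw [Yseq, if_neg (by omega)]

lemma Yseq_even (u₀ p r : ℤ → ℂ) (n₀ : ℤ) (k : ℕ) :
    Yseq u₀ p r n₀ (2 * k + 2) =
      istar n₀ (fun s => u₀ (s + 1) ^ 2 * Yseq u₀ p r n₀ (2 * k + 1) (s + 1) * r (s + 1)) := by
  rw [show 2 * k + 2 = (2 * k + 1) + 1 from rfl, Yseq, if_pos (by omega)]

lemma Y_vanish (u₀ p r : ℤ → ℂ) (n₀ : ℤ) : ∀ k : ℕ,
    (∀ n : ℤ, n₀ ≤ n → (n - n₀).natAbs < k → Yseq u₀ p r n₀ (2 * k) n = 0) ∧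
    (∀ n : ℤ, n < n₀ → (n - n₀).natAbs ≤ k → Yseq u₀ p r n₀ (2 * k) n = 0) ∧
    (∀ n : ℤ, (n - n₀).natAbs ≤ k → Yseq u₀ p r n₀ (2 * k + 1) n = 0) := by
  intro k
  induction k with
  | zero =>
    refine ⟨fun n _ h => absurd h (by omega), fun n hn h => absurd h (by omega), fun n h => ?_⟩
    have hn : n = n₀ := by omega
    subst hn
    rw [Yseq_odd, istar_base]
  | succ k ih =>
    obtain ⟨_, _, ihodd⟩ := ih
    have heq : 2 * (k + 1) = 2 * k + 2 := by ring
    have he1 : ∀ n : ℤ, n₀ ≤ n → (n - n₀).natAbs < k + 1 → Yseq u₀ p r n₀ (2 * (k + 1)) n = 0 := by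
      intro n hn h
      rw [heq, Yseq_even, istar, if_pos hn]
      apply Finset.sum_eq_zero
      intro s hs
      rw [Finset.mem_Ico] at hs
      rw [ihodd (s + 1) (by omega)]
      · ring
    have he2 : ∀ n : ℤ, n < n₀ → (n - n₀).natAbs ≤ k + 1 → Yseq u₀ p r n₀ (2 * (k + 1)) n = 0 := by
      intro n hn h
      rw [heq, Yseq_even, istar, if_neg (by omega)]
      rw [Finset.sum_eq_zero, neg_zero]
      intro s hs
      rw [Finset.mem_Ico] at hs
      rw [ihodd (s + 1) (by omega)]
      ring
    refine ⟨he1, he2, fun n h => ?_⟩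
    rw [Yseq_odd, istar]
    split
    · apply Finset.sum_eq_zero
      intro s hs
      rw [Finset.mem_Ico] at hs
      rw [he1 s (by omega) (by omega)]
      simp
    · rw [Finset.sum_eq_zero, neg_zero]
      intro s hs
      rw [Finset.mem_Ico] at hs
      rw [he2 s (by omega) (by omega)]
      simp

/-- Theorem 2, second solution: `u₂(n) = u₀(n) Σ_{k=0}^{|n-n₀|-1} λᵏ Y⁽²ᵏ⁺¹⁾(n)` (with
`u₂(n₀) = 0`) solves the Jacobi equation with spectral parameter `λ`. -/
theorem u2_solves (u₀ p q r u₂ : ℤ → ℂ) (n₀ : ℤ) (lam : ℂ)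
    (hp : ∀ n, p n ≠ 0) (hu₀ : ∀ n, u₀ n ≠ 0)
    (hsol : ∀ n : ℤ,
      p n * (u₀ (n + 1) - u₀ n) - p (n - 1) * (u₀ n - u₀ (n - 1)) + q n * u₀ n = 0)
    (hu₂ : ∀ n : ℤ, u₂ n = if n = n₀ then 0 else u₀ n *
        ∑ k ∈ Finset.range (n - n₀).natAbs, lam ^ k * Yseq u₀ p r n₀ (2 * k + 1) n) :
    ∀ n : ℤ,
      p n * (u₂ (n + 1) - u₂ n) - p (n - 1) * (u₂ n - u₂ (n - 1)) + q n * u₂ n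
        = lam * r n * u₂ n := by
  intro n
  have hvanish := fun k => (Y_vanish u₀ p r n₀ k).2.2
  set K : ℕ := (n - n₀).natAbs + 2 with hK
  set V : ℤ → ℂ := fun m => ∑ k ∈ Finset.range K, lam ^ k * Yseq u₀ p r n₀ (2 * k + 1) m
    with hVdef
  have hV : ∀ m : ℤ, (m - n₀).natAbs ≤ K → u₂ m = u₀ m * V m := by
    intro m hm
    rw [hu₂ m]
    by_cases hm0 : m = n₀
    · have hz : V m = 0 := by
        simp only [hVdef]
        apply Finset.sum_eq_zero
        intro k _
        rw [hvanish k m (by omega)]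
        ring
      rw [if_pos hm0, hz, mul_zero]
    · rw [if_neg hm0]
      congr 1
      simp only [hVdef]
      apply Finset.sum_subset (Finset.range_subset_range.mpr hm)
      intro k _ hk
      rw [Finset.mem_range, not_lt] at hk
      rw [hvanish k m hk]
      ring
  have hdiff : ∀ (k : ℕ) (m : ℤ), Yseq u₀ p r n₀ (2 * k + 1) (m + 1)
      = Yseq u₀ p r n₀ (2 * k + 1) m
        + Yseq u₀ p r n₀ (2 * k) m / (p m * u₀ m * u₀ (m + 1)) := by
    intro k m
    rw [Yseq_odd, istar_succ]
  have hE1 : ∀ m : ℤ, p m * u₀ m * u₀ (m + 1) * (V (m + 1) - V m)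
      = ∑ k ∈ Finset.range K, lam ^ k * Yseq u₀ p r n₀ (2 * k) m := by
    intro m
    have h1 : V (m + 1) - V m = ∑ k ∈ Finset.range K,
        lam ^ k * (Yseq u₀ p r n₀ (2 * k) m / (p m * u₀ m * u₀ (m + 1))) := by
      simp only [hVdef]
      rw [← Finset.sum_sub_distrib]
      apply Finset.sum_congr rfl
      intro k _
      rw [hdiff k m]
      ring
    rw [h1, Finset.mul_sum]
    apply Finset.sum_congr rfl
    intro k _
    have h2 := hp m
    have h3 := hu₀ m
    have h4 := hu₀ (m + 1)
    field_simp
  have hdiff2 : ∀ (k : ℕ) (m : ℤ), Yseq u₀ p r n₀ (2 * k + 2) (m + 1)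
      = Yseq u₀ p r n₀ (2 * k + 2) m
        + u₀ (m + 1) ^ 2 * Yseq u₀ p r n₀ (2 * k + 1) (m + 1) * r (m + 1) := by
    intro k m
    rw [Yseq_even, istar_succ]
  have hn1 : n - 1 + 1 = n := by ring
  have hE3 : (∑ k ∈ Finset.range K, lam ^ k * Yseq u₀ p r n₀ (2 * k) n)
      - (∑ k ∈ Finset.range K, lam ^ k * Yseq u₀ p r n₀ (2 * k) (n - 1))
      = lam * r n * u₀ n ^ 2 * V n := by
    rw [← Finset.sum_sub_distrib, hK]
    rw [show (n - n₀).natAbs + 2 = ((n - n₀).natAbs + 1) + 1 from rfl,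
      Finset.sum_range_succ']
    have hterm : ∀ k ∈ Finset.range ((n - n₀).natAbs + 1),
        lam ^ (k + 1) * Yseq u₀ p r n₀ (2 * (k + 1)) n
          - lam ^ (k + 1) * Yseq u₀ p r n₀ (2 * (k + 1)) (n - 1)
        = lam * r n * u₀ n ^ 2 * (lam ^ k * Yseq u₀ p r n₀ (2 * k + 1) n) := by
      intro k _
      have h2 := hdiff2 k (n - 1)
      rw [hn1] at h2
      rw [show 2 * (k + 1) = 2 * k + 2 from by ring, h2]
      ring
    rw [Finset.sum_congr rfl hterm, ← Finset.mul_sum]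
    have hV2 : V n = ∑ k ∈ Finset.range ((n - n₀).natAbs + 1),
        lam ^ k * Yseq u₀ p r n₀ (2 * k + 1) n := by
      simp only [hVdef, hK]
      rw [show (n - n₀).natAbs + 2 = ((n - n₀).natAbs + 1) + 1 from rfl,
        Finset.sum_range_succ, hvanish ((n - n₀).natAbs + 1) n (by omega)]
      ring
    rw [hV2]
    simp [Yseq_zero]
  have hVn1 : u₂ (n + 1) = u₀ (n + 1) * V (n + 1) := hV (n + 1) (by rw [hK]; omega)
  have hVn : u₂ n = u₀ n * V n := hV n (by rw [hK]; omega)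
  have hVm : u₂ (n - 1) = u₀ (n - 1) * V (n - 1) := hV (n - 1) (by rw [hK]; omega)
  have E1n := hE1 n
  have E1m := hE1 (n - 1)
  rw [hn1] at E1m
  rw [hVn1, hVn, hVm]
  apply mul_left_cancel₀ (hu₀ n)
  linear_combination E1n - E1m + hE3 + (u₀ n * V n) * hsol n
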